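/- Let (𝔉,𝒱)_E be an (𝔉,𝒱)_E-structure, let 𝔉* ⊆ 𝔉, and let T be any term. Then N(R_{I(𝔉*∧E)}(T)) ⊆ N(𝔉*) ∪ N(T), i.e., every variable set V ∈ 𝒱 meeting a variable of the reduced polynomial R_{I(𝔉*∧E)}(T) already meets a variable of some formula in 𝔉* or of T. -/
import Mathlib


attribute [local instance] Classical.propDecidable

/-- A literal is a variable together with a polarity (`true` = positive). -/
abbrev Clause (σ : Type) := Finset (σ × Bool)

/-- A CNF formula is a finite set of clauses. -/
abbrev CNF (σ : Type) := Finset (Clause σ)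

/-- The variables occurring in a clause. -/
def clauseVars {σ : Type} [DecidableEq σ] (C : Clause σ) : Finset σ := C.image Prod.fst

/-- The variables occurring in a CNF formula. -/
def cnfVars {σ : Type} [DecidableEq σ] (φ : CNF σ) : Finset σ := φ.sup clauseVars

/-- A (total) assignment satisfies a literal. -/
def litSat {σ : Type} (α : σ → Bool) (l : σ × Bool) : Prop := α l.1 = l.2

/-- A (total) assignment satisfies a clause. -/
def clauseSat {σ : Type} (α : σ → Bool) (C : Clause σ) : Prop := ∃ l ∈ C, litSat α l

/-- A (total) assignment satisfies a CNF formula. -/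
def cnfSat {σ : Type} (α : σ → Bool) (φ : CNF σ) : Prop := ∀ C ∈ φ, clauseSat α C

/-- Multilinearization: replace every exponent by its minimum with `1`. -/
noncomputable def mlin {σ 𝔽 : Type} [CommRing 𝔽] (p : MvPolynomial σ 𝔽) :
    MvPolynomial σ 𝔽 :=
  ∑ m ∈ p.support,
    MvPolynomial.monomial (Finsupp.mapRange (fun e => min e 1) (by simp) m) (p.coeff m)

/-- The polynomial translation of a clause: identifying true with `0`, the clause
`⋁_{x∈L⁺} x ∨ ⋁_{y∈L⁻} ¬y` becomes `∏_{x∈L⁺} x · ∏_{y∈L⁻} (1 - y)`. -/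
noncomputable def clausePoly {σ : Type} (𝔽 : Type) [CommRing 𝔽] (C : Clause σ) :
    MvPolynomial σ 𝔽 :=
  ∏ l ∈ C, if l.2 then MvPolynomial.X l.1 else 1 - MvPolynomial.X l.1
/-- An admissible total order on multilinear monomials (identified with finite sets of
variables): a strict linear order in which lower-degree monomials come first and which is
compatible with multiplication by monomials on disjoint sets of variables. -/
structure AdmissibleOrder (σ : Type) [DecidableEq σ] where
  lt : Finset σ → Finset σ → Prop
  irrefl : ∀ S, ¬ lt S S
  trans : ∀ {S T U : Finset σ}, lt S T → lt T U → lt S U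
  total : ∀ S T, S ≠ T → lt S T ∨ lt T S
  degree_lt : ∀ S T : Finset σ, S.card < T.card → lt S T
  mul_lt : ∀ S T m : Finset σ, lt S T → Disjoint m (S ∪ T) → lt (m ∪ S) (m ∪ T)

/-- `T` is the leading term of `Q` with respect to the admissible order `ord`. -/
def IsLeadTerm {σ 𝔽 : Type} [DecidableEq σ] [CommRing 𝔽] (ord : AdmissibleOrder σ)
    (Q T : MvPolynomial σ 𝔽) : Prop :=
  ∃ m ∈ Q.support, T = MvPolynomial.monomial m (Q.coeff m) ∧
    ∀ m' ∈ Q.support, m' ≠ m → ord.lt m'.support m.support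

/-- A term `T` is reducible modulo a set `I` of polynomials if `T` is the leading term of
some member of `I`. -/
def Reducible {σ 𝔽 : Type} [DecidableEq σ] [CommRing 𝔽] (ord : AdmissibleOrder σ)
    (I : Set (MvPolynomial σ 𝔽)) (T : MvPolynomial σ 𝔽) : Prop :=
  ∃ Q ∈ I, IsLeadTerm ord Q T

/-- `R` is the reduction of `P` modulo `I`: `R` is multilinear, `P - R ∈ I`, and every term
of `R` is irreducible modulo `I`. -/
def IsReduction {σ 𝔽 : Type} [DecidableEq σ] [CommRing 𝔽] (ord : AdmissibleOrder σ)
    (I : Set (MvPolynomial σ 𝔽)) (P R : MvPolynomial σ 𝔽) : Prop :=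
  mlin R = R ∧ P - R ∈ I ∧
    ∀ m ∈ R.support, ¬ Reducible ord I (MvPolynomial.monomial m (R.coeff m))

/-- The reduction operator `R_I` modulo `I` (well defined on multilinear polynomials when
`I` is an ideal of the multilinear ring). -/
noncomputable def redOp {σ 𝔽 : Type} [DecidableEq σ] [CommRing 𝔽] (ord : AdmissibleOrder σ)
    (I : Set (MvPolynomial σ 𝔽)) (P : MvPolynomial σ 𝔽) : MvPolynomial σ 𝔽 :=
  if h : ∃ R, IsReduction ord I P R then h.choose else 0

/-- A subset of the multilinear polynomial ring is an ideal of that ring: it consists of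
multilinear polynomials, contains `0`, and is closed under addition and under multiplication
(followed by multilinearization) by arbitrary polynomials. -/
def IsMLIdeal {σ 𝔽 : Type} [CommRing 𝔽] (I : Set (MvPolynomial σ 𝔽)) : Prop :=
  0 ∈ I ∧ (∀ p ∈ I, mlin p = p) ∧ (∀ p ∈ I, ∀ q ∈ I, p + q ∈ I) ∧
    (∀ p ∈ I, ∀ q : MvPolynomial σ 𝔽, mlin (q * p) ∈ I)

/-- The multilinear (squarefree) monomial with support `m`. -/
noncomputable def monoOf {σ : Type} [DecidableEq σ] (m : Finset σ) : σ →₀ ℕ :=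
  ∑ x ∈ m, Finsupp.single x 1
/-- A partial assignment with domain `D` and values `α` respects the CNF formula `E`:
every clause of `E` sharing a variable with `D` is satisfied by the assignment (via a
literal whose variable lies in `D`). -/
def Respects {σ : Type} [DecidableEq σ] (D : Finset σ) (α : σ → Bool) (E : CNF σ) : Prop :=
  ∀ C ∈ E, (clauseVars C ∩ D).Nonempty → ∃ l ∈ C, l.1 ∈ D ∧ α l.1 = l.2

/-- A variable set `V` respects `E` if some assignment with domain `V` respects `E`. -/
def VRespects {σ : Type} [DecidableEq σ] (V : Finset σ) (E : CNF σ) : Prop :=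
  ∃ α : σ → Bool, Respects V α E

/-- The formula `F` is respectfully satisfiable by the variable set `V` (with respect to
`E`): some assignment with domain `V` satisfies `F` and respects `E`. -/
def RSat {σ : Type} [DecidableEq σ] (E F : CNF σ) (V : Finset σ) : Prop :=
  ∃ α : σ → Bool, Respects V α E ∧ ∀ C ∈ F, ∃ l ∈ C, l.1 ∈ V ∧ α l.1 = l.2

/-- An `(𝔉,𝒱)_E`-structure: a CNF formula `Ecnf`, a family `fam` of CNF formulas, and a
family `vfam` of variable sets, each respecting `Ecnf`. -/
structure FVStructure (σ : Type) [DecidableEq σ] where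
  Ecnf : CNF σ
  fam : Finset (CNF σ)
  vfam : Finset (Finset σ)
  vfam_respects : ∀ V ∈ vfam, VRespects V Ecnf

/-- `F` and `V` are neighbours: they share a variable. -/
def Nbr {σ : Type} [DecidableEq σ] (F : CNF σ) (V : Finset σ) : Prop :=
  (cnfVars F ∩ V).Nonempty

/-- `F` and `V` are respectful neighbours. -/
def RNbr {σ : Type} [DecidableEq σ] (E F : CNF σ) (V : Finset σ) : Prop :=
  Nbr F V ∧ RSat E F V

/-- The respectful boundary of a subfamily `𝔛 ⊆ fam`: all `V ∈ vfam` that are a respectful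
neighbour of some `F ∈ 𝔛` and not a neighbour of any other member of `𝔛`. -/
noncomputable def rbdry {σ : Type} [DecidableEq σ] (S : FVStructure σ)
    (𝔛 : Finset (CNF σ)) : Finset (Finset σ) :=
  S.vfam.filter fun V =>
    ∃ F ∈ 𝔛, RNbr S.Ecnf F V ∧ ∀ F' ∈ 𝔛, F' ≠ F → ¬ Nbr F' V

/-- A respectful `(s,δ,ξ)`-boundary expander. -/
def IsRBExpander {σ : Type} [DecidableEq σ] (S : FVStructure σ) (s : ℕ) (δ ξ : ℝ) : Prop :=
  ∀ 𝔛 ⊆ S.fam, 𝔛.card ≤ s → δ * (𝔛.card : ℝ) - ξ ≤ ((rbdry S 𝔛).card : ℝ)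

/-- `𝔛` is `(s,𝒱')`-contained: `𝔛 ⊆ fam`, `|𝔛| ≤ s` and `∂(𝔛) ⊆ 𝒱'`. -/
def Contained {σ : Type} [DecidableEq σ] (S : FVStructure σ) (s : ℕ)
    (𝒱' : Finset (Finset σ)) (𝔛 : Finset (CNF σ)) : Prop :=
  𝔛 ⊆ S.fam ∧ 𝔛.card ≤ s ∧ rbdry S 𝔛 ⊆ 𝒱'

/-- The `s`-support of `𝒱'`: the union of all `(s,𝒱')`-contained subsets of `fam`. -/
noncomputable def suppV {σ : Type} [DecidableEq σ] (S : FVStructure σ) (s : ℕ)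
    (𝒱' : Finset (Finset σ)) : Finset (CNF σ) :=
  S.fam.filter fun F => ∃ 𝔛, Contained S s 𝒱' 𝔛 ∧ F ∈ 𝔛

/-- The overlap of a family of variable sets: the maximum number of sets that contain any
single variable. -/
noncomputable def overlap {σ : Type} [Fintype σ] [DecidableEq σ]
    (𝒱 : Finset (Finset σ)) : ℕ :=
  Finset.univ.sup fun x : σ => (𝒱.filter fun V => x ∈ V).card

/-- The neighbourhood `N(T)` of a (multilinear) monomial `m`: all `V ∈ vfam` meeting it. -/
noncomputable def nbrsM {σ : Type} [DecidableEq σ] (S : FVStructure σ) (m : Finset σ) :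
    Finset (Finset σ) :=
  S.vfam.filter fun V => (m ∩ V).Nonempty

/-- The neighbourhood of a subfamily `𝔛 ⊆ fam`. -/
noncomputable def nbrsF {σ : Type} [DecidableEq σ] (S : FVStructure σ)
    (𝔛 : Finset (CNF σ)) : Finset (Finset σ) :=
  S.vfam.filter fun V => ∃ F ∈ 𝔛, (cnfVars F ∩ V).Nonempty

/-- The `s`-support `Sup_s(T)` of a term with monomial `m`, i.e. `Sup_s(N(T))`. -/
noncomputable def suppM {σ : Type} [DecidableEq σ] (S : FVStructure σ) (s : ℕ)
    (m : Finset σ) : Finset (CNF σ) :=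
  suppV S s (nbrsM S m)

/-- All clauses of the CNF formula `𝔛 ∧ E`. -/
noncomputable def clausesOf {σ : Type} [DecidableEq σ] (S : FVStructure σ)
    (𝔛 : Finset (CNF σ)) : CNF σ :=
  𝔛.sup id ∪ S.Ecnf
/-- The ideal `I(𝔛 ∧ E)` of the multilinear ring generated by the polynomial translations
of all clauses of the formulas in `𝔛` together with all clauses of `E`. -/
def idealOf {σ : Type} (𝔽 : Type) [Field 𝔽] [DecidableEq σ] (S : FVStructure σ)
    (𝔛 : Finset (CNF σ)) : Set (MvPolynomial σ 𝔽) :=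
  { P | ∃ q : Clause σ → MvPolynomial σ 𝔽,
      P = mlin (∑ C ∈ clausesOf S 𝔛, q C * clausePoly 𝔽 C) }

/-- The neighbourhood `N(P)` of a polynomial: all `V ∈ vfam` meeting a variable of `P`. -/
noncomputable def nbrsP {σ 𝔽 : Type} [DecidableEq σ] [CommRing 𝔽] (S : FVStructure σ)
    (P : MvPolynomial σ 𝔽) : Finset (Finset σ) :=
  S.vfam.filter fun V => (P.vars ∩ V).Nonempty

section Helpers

open MvPolynomial Finset

variable {𝔽 σ : Type} [Field 𝔽] [Fintype σ] [DecidableEq σ]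

/-- Truncation of exponent vectors. -/
noncomputable def trunc (e : σ →₀ ℕ) : σ →₀ ℕ :=
  Finsupp.mapRange (fun k => min k 1) (by simp) e

lemma trunc_apply (e : σ →₀ ℕ) (x : σ) : trunc e x = min (e x) 1 := rfl

lemma trunc_support (e : σ →₀ ℕ) : (trunc e).support = e.support := by
  ext x
  simp only [Finsupp.mem_support_iff, trunc_apply]
  omega

/-- A multilinear exponent vector. -/
def MLm (e : σ →₀ ℕ) : Prop := ∀ x, e x ≤ 1

lemma MLm_trunc (e : σ →₀ ℕ) : MLm (trunc e) := fun x => min_le_right _ _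

lemma monoOf_apply (m : Finset σ) (x : σ) : monoOf m x = if x ∈ m then 1 else 0 := by
  classical
  rw [monoOf, Finset.sum_apply']
  simp only [Finsupp.single_apply]
  rw [Finset.sum_ite_eq' m x (fun _ => 1)]

lemma monoOf_support (m : Finset σ) : (monoOf m).support = m := by
  ext x
  simp only [Finsupp.mem_support_iff, monoOf_apply]
  split <;> simp_all

lemma MLm_monoOf (m : Finset σ) : MLm (monoOf m) := by
  intro x; rw [monoOf_apply]; split <;> omega

lemma MLm.eq_monoOf {e : σ →₀ ℕ} (h : MLm e) : e = monoOf e.support := by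
  ext x
  rw [monoOf_apply]
  split
  · next hx => have := Finsupp.mem_support_iff.mp hx; have := h x; omega
  · next hx => exact Finsupp.notMem_support_iff.mp hx

lemma MLm.eq_of_support_eq {e e' : σ →₀ ℕ} (h : MLm e) (h' : MLm e')
    (hs : e.support = e'.support) : e = e' := by
  rw [h.eq_monoOf, h'.eq_monoOf, hs]

lemma trunc_eq_monoOf (e : σ →₀ ℕ) : trunc e = monoOf e.support := by
  rw [(MLm_trunc e).eq_monoOf, trunc_support]

/-- A multilinear polynomial. -/
def MLp (p : MvPolynomial σ 𝔽) : Prop := ∀ e ∈ p.support, MLm e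

lemma mlin_def (p : MvPolynomial σ 𝔽) :
    mlin p = ∑ e ∈ p.support, MvPolynomial.monomial (trunc e) (p.coeff e) := rfl

lemma mlin_support (p : MvPolynomial σ 𝔽) :
    ∀ e' ∈ (mlin p).support, ∃ e ∈ p.support, e' = trunc e := by
  intro e' h
  rw [mlin_def] at h
  obtain ⟨e, he, h2⟩ := Finset.mem_biUnion.mp (MvPolynomial.support_sum h)
  exact ⟨e, he, Finset.mem_singleton.mp (MvPolynomial.support_monomial_subset h2)⟩

lemma MLp_mlin (p : MvPolynomial σ 𝔽) : MLp (mlin p) := by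
  intro e' h
  obtain ⟨e, _, rfl⟩ := mlin_support p e' h
  exact MLm_trunc e

lemma MLp_monomial {u : σ →₀ ℕ} (hu : MLm u) (c : 𝔽) :
    MLp (MvPolynomial.monomial u c) := by
  intro e he
  rw [Finset.mem_singleton.mp (MvPolynomial.support_monomial_subset he)]
  exact hu

lemma MLp.sub {p q : MvPolynomial σ 𝔽} (hp : MLp p) (hq : MLp q) : MLp (p - q) := by
  intro e he
  rcases Finset.mem_union.mp (MvPolynomial.support_sub σ p q he) with h | h
  exacts [hp e h, hq e h]

lemma pow_min01 {t : 𝔽} (h : t = 0 ∨ t = 1) (k : ℕ) : t ^ min k 1 = t ^ k := by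
  rcases h with rfl | rfl
  · cases k with
    | zero => simp
    | succ n =>
      rw [min_eq_right (by omega), pow_one, zero_pow (by omega)]
  · simp

lemma prod_pow_01 {z : σ → 𝔽} (hz : ∀ x, z x = 0 ∨ z x = 1) (e : σ →₀ ℕ) :
    (e.prod fun n k => z n ^ k) = ∏ x ∈ e.support, z x := by
  unfold Finsupp.prod
  refine Finset.prod_congr rfl fun x hx => ?_
  have hk : e x ≠ 0 := Finsupp.mem_support_iff.mp hx
  show z x ^ e x = z x
  rcases hz x with h | h <;> rw [h]
  · rw [zero_pow hk]
  · rw [one_pow]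

lemma eval_mlin {z : σ → 𝔽} (hz : ∀ x, z x = 0 ∨ z x = 1) (p : MvPolynomial σ 𝔽) :
    MvPolynomial.eval z (mlin p) = MvPolynomial.eval z p := by
  rw [mlin_def, map_sum]
  conv_rhs => rw [p.as_sum, map_sum]
  refine Finset.sum_congr rfl fun e _ => ?_
  rw [MvPolynomial.eval_monomial, MvPolynomial.eval_monomial,
    prod_pow_01 hz, prod_pow_01 hz, trunc_support]

lemma eval_indicator (p : MvPolynomial σ 𝔽) (S : Finset σ) :
    MvPolynomial.eval (fun x => if x ∈ S then (1 : 𝔽) else 0) p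
      = ∑ e ∈ p.support.filter (fun e => e.support ⊆ S), p.coeff e := by
  rw [MvPolynomial.eval_eq, Finset.sum_filter]
  refine Finset.sum_congr rfl fun e _ => ?_
  by_cases hss : e.support ⊆ S
  · rw [if_pos hss]
    have : ∏ i ∈ e.support, (if i ∈ S then (1 : 𝔽) else 0) ^ e i = 1 :=
      Finset.prod_eq_one fun i hi => by rw [if_pos (hss hi), one_pow]
    rw [this, mul_one]
  · rw [if_neg hss]
    obtain ⟨i, hi, hiS⟩ := Finset.not_subset.mp hss
    rw [Finset.prod_eq_zero hi, mul_zero]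
    rw [if_neg hiS, zero_pow (Finsupp.mem_support_iff.mp hi)]

lemma MLp.eq_zero {p : MvPolynomial σ 𝔽} (hp : MLp p)
    (h0 : ∀ z : σ → 𝔽, (∀ x, z x = 0 ∨ z x = 1) → MvPolynomial.eval z p = 0) :
    p = 0 := by
  by_contra hne
  obtain ⟨e, he, hmin⟩ := Finset.exists_min_image p.support (fun e => e.support.card)
    (MvPolynomial.support_nonempty.mpr hne)
  have h01 : ∀ x : σ, (if x ∈ e.support then (1 : 𝔽) else 0) = 0 ∨
      (if x ∈ e.support then (1 : 𝔽) else 0) = 1 := fun x => by split <;> simp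
  have hev := h0 _ h01
  rw [eval_indicator] at hev
  have hflt : p.support.filter (fun e' => e'.support ⊆ e.support) = {e} := by
    ext e'
    simp only [Finset.mem_filter, Finset.mem_singleton]
    constructor
    · rintro ⟨h1, h2⟩
      exact (hp e' h1).eq_of_support_eq (hp e he)
        (Finset.eq_of_subset_of_card_le h2 (hmin e' h1))
    · rintro rfl
      exact ⟨he, Finset.Subset.refl _⟩
  rw [hflt, Finset.sum_singleton] at hev
  exact MvPolynomial.mem_support_iff.mp he hev

lemma ml_ext {p q : MvPolynomial σ 𝔽} (hp : MLp p) (hq : MLp q)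
    (h : ∀ z : σ → 𝔽, (∀ x, z x = 0 ∨ z x = 1) →
      MvPolynomial.eval z p = MvPolynomial.eval z q) : p = q := by
  have := (hp.sub hq).eq_zero (fun z hz => by rw [map_sub, h z hz, sub_self])
  exact sub_eq_zero.mp this

lemma MLp.mlin_eq {p : MvPolynomial σ 𝔽} (hp : MLp p) : mlin p = p :=
  ml_ext (MLp_mlin p) hp (fun z hz => eval_mlin hz p)

lemma idealOf_ml {S : FVStructure σ} {𝔛 : Finset (CNF σ)} {P : MvPolynomial σ 𝔽}
    (h : P ∈ idealOf 𝔽 S 𝔛) : MLp P := by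
  obtain ⟨q, rfl⟩ := h
  exact MLp_mlin _

lemma idealOf_sub {S : FVStructure σ} {𝔛 : Finset (CNF σ)} {P P' : MvPolynomial σ 𝔽}
    (h : P ∈ idealOf 𝔽 S 𝔛) (h' : P' ∈ idealOf 𝔽 S 𝔛) : P - P' ∈ idealOf 𝔽 S 𝔛 := by
  obtain ⟨q, rfl⟩ := h
  obtain ⟨q', rfl⟩ := h'
  refine ⟨fun C => q C - q' C, ?_⟩
  refine ml_ext ((MLp_mlin _).sub (MLp_mlin _)) (MLp_mlin _) fun z hz => ?_
  rw [map_sub, eval_mlin hz, eval_mlin hz, eval_mlin hz]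
  simp only [sub_mul, Finset.sum_sub_distrib, map_sub]

lemma idealOf_mul {S : FVStructure σ} {𝔛 : Finset (CNF σ)} {P : MvPolynomial σ 𝔽}
    (h : P ∈ idealOf 𝔽 S 𝔛) (q : MvPolynomial σ 𝔽) : mlin (q * P) ∈ idealOf 𝔽 S 𝔛 := by
  obtain ⟨r, rfl⟩ := h
  refine ⟨fun C => q * r C, ?_⟩
  refine ml_ext (MLp_mlin _) (MLp_mlin _) fun z hz => ?_
  rw [eval_mlin hz, eval_mlin hz, map_mul, eval_mlin hz]
  simp only [Finset.mul_sum, map_sum, map_mul, mul_assoc]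

lemma ord_asymm (ord : AdmissibleOrder σ) {s t : Finset σ} (h : ord.lt s t) :
    ¬ ord.lt t s := fun h' => ord.irrefl s (ord.trans h h')

lemma card_le_of_ord_lt (ord : AdmissibleOrder σ) {s t : Finset σ} (h : ord.lt s t) :
    s.card ≤ t.card := by
  by_contra hc
  push_neg at hc
  exact ord_asymm ord h (ord.degree_lt _ _ hc)

lemma exists_lead (ord : AdmissibleOrder σ) (s : Finset (σ →₀ ℕ)) (hs : s.Nonempty)
    (hml : ∀ e ∈ s, MLm e) :
    ∃ m₀ ∈ s, ∀ m' ∈ s, m' ≠ m₀ → ord.lt m'.support m₀.support := by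
  classical
  induction s using Finset.induction_on with
  | empty => exact absurd hs (by simp)
  | @insert a s ha ih =>
    rcases s.eq_empty_or_nonempty with rfl | hsne
    · refine ⟨a, Finset.mem_insert_self _ _, ?_⟩
      intro m' hm' hne
      rcases Finset.mem_insert.mp hm' with rfl | h
      · exact absurd rfl hne
      · simp at h
    · obtain ⟨m₀, hm₀, hmax⟩ := ih hsne (fun e he => hml e (Finset.mem_insert_of_mem he))
      have hne : a ≠ m₀ := fun h => ha (h ▸ hm₀)
      have hsneq : a.support ≠ m₀.support := fun h =>
        hne ((hml a (Finset.mem_insert_self _ _)).eq_of_support_eq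
          (hml m₀ (Finset.mem_insert_of_mem hm₀)) h)
      rcases ord.total _ _ hsneq with h | h
      · refine ⟨m₀, Finset.mem_insert_of_mem hm₀, ?_⟩
        intro m' hm' hne'
        rcases Finset.mem_insert.mp hm' with rfl | hm's
        · exact h
        · exact hmax m' hm's hne'
      · refine ⟨a, Finset.mem_insert_self _ _, ?_⟩
        intro m' hm' hne'
        rcases Finset.mem_insert.mp hm' with rfl | hm's
        · exact absurd rfl hne'
        · by_cases hm'm : m' = m₀
          · exact hm'm ▸ h
          · exact ord.trans (hmax m' hm's hm'm) h

lemma support_add_nat (f g : σ →₀ ℕ) : (f + g).support = f.support ∪ g.support := by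
  ext x
  simp only [Finsupp.mem_support_iff, Finsupp.add_apply, Finset.mem_union]
  omega

lemma mlin_monomial_mul (δ : Finset σ) (γ : 𝔽) (Q : MvPolynomial σ 𝔽) :
    mlin (MvPolynomial.monomial (monoOf δ) γ * Q)
      = ∑ e ∈ Q.support, MvPolynomial.monomial (monoOf (δ ∪ e.support)) (γ * Q.coeff e) := by
  have hML : MLp (∑ e ∈ Q.support,
      MvPolynomial.monomial (monoOf (δ ∪ e.support)) (γ * Q.coeff e)) := by
    intro e' he'
    obtain ⟨e, _, h2⟩ := Finset.mem_biUnion.mp (MvPolynomial.support_sum he')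
    rw [Finset.mem_singleton.mp (MvPolynomial.support_monomial_subset h2)]
    exact MLm_monoOf _
  refine ml_ext (MLp_mlin _) hML fun z hz => ?_
  rw [eval_mlin hz]
  conv_lhs => rw [Q.as_sum]
  rw [Finset.mul_sum, map_sum, map_sum]
  refine Finset.sum_congr rfl fun e _ => ?_
  rw [MvPolynomial.monomial_mul, MvPolynomial.eval_monomial, MvPolynomial.eval_monomial,
    prod_pow_01 hz, prod_pow_01 hz, support_add_nat, monoOf_support, monoOf_support]

lemma lift_reducible (ord : AdmissibleOrder σ) (S : FVStructure σ) (𝔛 : Finset (CNF σ))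
    {Q : MvPolynomial σ 𝔽} (hQ : Q ∈ idealOf 𝔽 S 𝔛)
    {m₀ : σ →₀ ℕ} (hm₀ : m₀ ∈ Q.support)
    (hlead : ∀ m' ∈ Q.support, m' ≠ m₀ → ord.lt m'.support m₀.support)
    {e : σ →₀ ℕ} (he : MLm e) (hsub : m₀.support ⊆ e.support) {c : 𝔽} (hc : c ≠ 0) :
    Reducible ord (idealOf 𝔽 S 𝔛) (MvPolynomial.monomial e c) := by
  classical
  have hMLQ : MLp Q := idealOf_ml hQ
  set d : Finset σ := e.support \ m₀.support with hd
  have hdm : Disjoint d m₀.support := Finset.sdiff_disjoint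
  have hde : d ∪ m₀.support = e.support := Finset.sdiff_union_of_subset hsub
  set c₀ : 𝔽 := Q.coeff m₀ with hc₀def
  have hc₀ : c₀ ≠ 0 := MvPolynomial.mem_support_iff.mp hm₀
  set γ : 𝔽 := c / c₀ with hγ
  set Q' : MvPolynomial σ 𝔽 := mlin (MvPolynomial.monomial (monoOf d) γ * Q) with hQ'def
  have hQ'mem : Q' ∈ idealOf 𝔽 S 𝔛 := idealOf_mul hQ _
  have hrepr : Q' = ∑ e₁ ∈ Q.support,
      MvPolynomial.monomial (monoOf (d ∪ e₁.support)) (γ * Q.coeff e₁) :=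
    mlin_monomial_mul d γ Q
  have hcond : ∀ e₁ ∈ Q.support, (monoOf (d ∪ e₁.support) = e ↔ e₁ = m₀) := by
    intro e₁ he₁
    constructor
    · intro h
      by_contra hne
      have hlt := hlead e₁ he₁ hne
      have hcard := card_le_of_ord_lt ord hlt
      have hsupp : d ∪ e₁.support = e.support := by
        rw [← monoOf_support (d ∪ e₁.support), h, he.eq_monoOf, monoOf_support]
      have h1 : e.support.card = d.card + m₀.support.card := by
        rw [← hde, Finset.card_union_of_disjoint hdm]
      have h2 := Finset.card_union_add_card_inter d e₁.support
      rw [hsupp] at h2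
      have h3 : e₁.support.card = m₀.support.card := by omega
      have h4 : (d ∩ e₁.support).card = 0 := by omega
      have hdisj : Disjoint d e₁.support := by
        rw [Finset.disjoint_iff_inter_eq_empty]
        exact Finset.card_eq_zero.mp h4
      have hse : e₁.support = m₀.support := by
        apply Finset.Subset.antisymm
        · intro x hx
          have hx2 : x ∈ d ∪ m₀.support := by rw [hde, ← hsupp]; exact Finset.mem_union_right _ hx
          rcases Finset.mem_union.mp hx2 with h' | h'
          · exact absurd hx (Finset.disjoint_left.mp hdisj h')
          · exact h'
        · intro x hx
          have hx2 : x ∈ d ∪ e₁.support := by rw [hsupp, ← hde]; exact Finset.mem_union_right _ hx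
          rcases Finset.mem_union.mp hx2 with h' | h'
          · exact absurd hx (Finset.disjoint_left.mp hdm h')
          · exact h'
      exact hne ((hMLQ e₁ he₁).eq_of_support_eq (hMLQ m₀ hm₀) hse)
    · rintro rfl
      rw [hde, ← he.eq_monoOf]
  have hcoeff : Q'.coeff e = c := by
    rw [hrepr, MvPolynomial.coeff_sum]
    have hterm : ∀ e₁ ∈ Q.support,
        MvPolynomial.coeff e (MvPolynomial.monomial (monoOf (d ∪ e₁.support)) (γ * Q.coeff e₁))
          = if e₁ = m₀ then γ * Q.coeff e₁ else 0 := by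
      intro e₁ he₁
      rw [MvPolynomial.coeff_monomial]
      by_cases h : e₁ = m₀
      · rw [if_pos h, if_pos ((hcond e₁ he₁).mpr h)]
      · rw [if_neg h, if_neg (fun hh => h ((hcond e₁ he₁).mp hh))]
    rw [Finset.sum_congr rfl hterm, Finset.sum_ite_eq' Q.support m₀ _, if_pos hm₀,
      hγ, div_mul_cancel₀ c hc₀]
  have hmax' : ∀ e'' ∈ Q'.support, e'' ≠ e → ord.lt e''.support e.support := by
    intro e'' h'' hne
    rw [hrepr] at h''
    obtain ⟨e₁, he₁, h2⟩ := Finset.mem_biUnion.mp (MvPolynomial.support_sum h'')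
    have he'' : e'' = monoOf (d ∪ e₁.support) :=
      Finset.mem_singleton.mp (MvPolynomial.support_monomial_subset h2)
    have hne₁ : e₁ ≠ m₀ := fun h => hne (he'' ▸ (hcond e₁ he₁).mpr h)
    have hlt₁ := hlead e₁ he₁ hne₁
    rw [he'', monoOf_support]
    have hgoal : e.support = d ∪ m₀.support := hde.symm
    rw [hgoal]
    by_cases hdisj : Disjoint d e₁.support
    · exact ord.mul_lt e₁.support m₀.support d hlt₁
        (Finset.disjoint_union_right.mpr ⟨hdisj, hdm⟩)
    · apply ord.degree_lt
      have hcard₁ : e₁.support.card ≤ m₀.support.card := card_le_of_ord_lt ord hlt₁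
      have h2' := Finset.card_union_add_card_inter d e₁.support
      have hint : (d ∩ e₁.support).card ≠ 0 := fun h0 =>
        hdisj (Finset.disjoint_iff_inter_eq_empty.mpr (Finset.card_eq_zero.mp h0))
      have h3' := Finset.card_union_of_disjoint hdm
      omega
  refine ⟨Q', hQ'mem, e, ?_, ?_, hmax'⟩
  · rw [MvPolynomial.mem_support_iff, hcoeff]
    exact hc
  · rw [hcoeff]

end Helpers

/-- for any `𝔉* ⊆ 𝔉` and any term `T = a·∏_{x∈m} x`, the neighbourhood of
the reduction `R_{I(𝔉*∧E)}(T)` is contained in `N(𝔉*) ∪ N(T)`. -/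
theorem stmt7 {𝔽 σ : Type} [Field 𝔽] [Fintype σ] [DecidableEq σ]
    (ord : AdmissibleOrder σ) (S : FVStructure σ)
    (𝔛 : Finset (CNF σ)) (hsub : 𝔛 ⊆ S.fam)
    (a : 𝔽) (ha : a ≠ 0) (m : Finset σ) :
    nbrsP S (redOp ord (idealOf 𝔽 S 𝔛) (MvPolynomial.monomial (monoOf m) a))
      ⊆ nbrsF S 𝔛 ∪ nbrsM S m := by
  classical
  open MvPolynomial Finset in
  set P : MvPolynomial σ 𝔽 := MvPolynomial.monomial (monoOf m) a with hPdef
  rw [redOp]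
  split
  case isFalse h => simp [nbrsP, MvPolynomial.vars_0]
  case isTrue h =>
  obtain ⟨hRml, hPR, hirr⟩ := h.choose_spec
  set R : MvPolynomial σ 𝔽 := h.choose with hRdef
  have hMLR : MLp R := by rw [← hRml]; exact MLp_mlin R
  intro V hV
  rw [nbrsP, Finset.mem_filter] at hV
  obtain ⟨hVfam, hVR⟩ := hV
  by_contra hVnot
  rw [Finset.mem_union] at hVnot
  push_neg at hVnot
  obtain ⟨hVF, hVm⟩ := hVnot
  rw [nbrsF, Finset.mem_filter] at hVF
  rw [nbrsM, Finset.mem_filter] at hVm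
  have hF : ∀ F ∈ 𝔛, ∀ x ∈ cnfVars F, x ∉ V := by
    intro F hF x hx hxV
    exact hVF ⟨hVfam, F, hF, ⟨x, Finset.mem_inter.mpr ⟨hx, hxV⟩⟩⟩
  have hm : ∀ x ∈ m, x ∉ V := fun x hx hxV =>
    hVm ⟨hVfam, x, Finset.mem_inter.mpr ⟨hx, hxV⟩⟩
  obtain ⟨α, hα⟩ := S.vfam_respects V hVfam
  set b : σ → 𝔽 := fun x => if α x then 0 else 1 with hbdef
  have hb : ∀ x, b x = 0 ∨ b x = 1 := fun x => by
    rw [hbdef]; by_cases h : α x <;> simp [h]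
  set φ : σ → MvPolynomial σ 𝔽 := fun x => if x ∈ V then MvPolynomial.C (b x)
    else MvPolynomial.X x with hφdef
  set ρ : MvPolynomial σ 𝔽 →ₐ[𝔽] MvPolynomial σ 𝔽 := MvPolynomial.aeval φ with hρdef
  have hcomp : ∀ (z : σ → 𝔽) (p : MvPolynomial σ 𝔽),
      MvPolynomial.eval z (ρ p) = MvPolynomial.eval (fun x => if x ∈ V then b x else z x) p := by
    intro z p
    have h1 : ρ p = MvPolynomial.eval₂ MvPolynomial.C φ p := by
      rw [hρdef, MvPolynomial.aeval_def, MvPolynomial.algebraMap_eq]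
    rw [h1, ← MvPolynomial.eval_assoc]
    have hfun : (⇑(MvPolynomial.eval z) ∘ φ) = fun x => if x ∈ V then b x else z x := by
      funext x
      rw [Function.comp_apply, hφdef]
      by_cases hx : x ∈ V <;> simp [hx]
    rw [hfun]
  have hclause : ∀ Cl ∈ clausesOf S 𝔛,
      ρ (clausePoly 𝔽 Cl) = clausePoly 𝔽 Cl ∨ ρ (clausePoly 𝔽 Cl) = 0 := by
    intro Cl hCl
    by_cases hint : (clauseVars Cl ∩ V).Nonempty
    · right
      have hCl' : Cl ∈ S.Ecnf := by
        rcases Finset.mem_union.mp hCl with hc | hc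
        · exfalso
          obtain ⟨x, hx⟩ := hint
          rw [Finset.mem_inter] at hx
          obtain ⟨F, hF𝔛, hClF⟩ := Finset.mem_sup.mp hc
          have hxF : x ∈ cnfVars F :=
            Finset.mem_sup.mpr ⟨Cl, hClF, hx.1⟩
          exact hF F hF𝔛 x hxF hx.2
        · exact hc
      obtain ⟨l, hl, hlV, hlα⟩ := hα Cl hCl' hint
      rw [clausePoly, map_prod]
      apply Finset.prod_eq_zero hl
      by_cases hpol : l.2
      · rw [if_pos hpol]
        have : ρ (MvPolynomial.X l.1) = MvPolynomial.C (b l.1) := by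
          rw [hρdef, MvPolynomial.aeval_X, hφdef]; simp [hlV]
        rw [this, hbdef]
        simp [hlα, hpol]
      · rw [if_neg hpol]
        have hbl : b l.1 = 1 := by
          rw [hbdef]; simp only [hlα]; rw [Bool.not_eq_true] at hpol; simp [hpol]
        have : ρ (1 - MvPolynomial.X l.1) = 1 - MvPolynomial.C (b l.1) := by
          rw [map_sub, map_one, hρdef, MvPolynomial.aeval_X, hφdef]; simp [hlV]
        rw [this, hbl]
        simp
    · left
      rw [clausePoly, map_prod]
      refine Finset.prod_congr rfl fun l hl => ?_
      have hlV : l.1 ∉ V := fun hmem => hint ⟨l.1, Finset.mem_inter.mpr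
        ⟨Finset.mem_image.mpr ⟨l, hl, rfl⟩, hmem⟩⟩
      have hX : ρ (MvPolynomial.X l.1) = MvPolynomial.X l.1 := by
        rw [hρdef, MvPolynomial.aeval_X, hφdef]; simp [hlV]
      by_cases hpol : l.2
      · rw [if_pos hpol, hX]
      · rw [if_neg hpol, map_sub, map_one, hX]
  set R' : MvPolynomial σ 𝔽 := mlin (ρ R) with hR'def
  have hMLR' : MLp R' := MLp_mlin _
  have hsupp' : ∀ e' ∈ R'.support, ∃ e ∈ R.support, e'.support ⊆ e.support \ V := by
    intro e' he'
    obtain ⟨u, hu, rfl⟩ := mlin_support _ e' he'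
    have hsum : (ρ R) = ∑ e ∈ R.support, ρ (MvPolynomial.monomial e (R.coeff e)) := by
      conv_lhs => rw [R.as_sum]
      rw [map_sum]
    rw [hsum] at hu
    obtain ⟨e, he, hu2⟩ := Finset.mem_biUnion.mp (MvPolynomial.support_sum hu)
    refine ⟨e, he, ?_⟩
    rw [trunc_support]
    intro x hx
    have hxvars : x ∈ (ρ (MvPolynomial.monomial e (R.coeff e))).vars :=
      (MvPolynomial.mem_vars x).mpr ⟨u, hu2, hx⟩
    have hρmon : ρ (MvPolynomial.monomial e (R.coeff e))
        = MvPolynomial.C (R.coeff e) * e.prod (fun n k => φ n ^ k) := by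
      rw [hρdef, MvPolynomial.aeval_monomial, MvPolynomial.algebraMap_eq]
    have hvars : (ρ (MvPolynomial.monomial e (R.coeff e))).vars ⊆ e.support \ V := by
      rw [hρmon]
      refine subset_trans (MvPolynomial.vars_mul _ _) ?_
      rw [MvPolynomial.vars_C, Finset.empty_union]
      unfold Finsupp.prod
      refine subset_trans (MvPolynomial.vars_prod _) (Finset.biUnion_subset.mpr
        fun n hn => subset_trans (MvPolynomial.vars_pow _ _) ?_)
      by_cases hnV : n ∈ V
      · rw [hφdef]
        simp [hnV, MvPolynomial.vars_C]
      · rw [hφdef]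
        simp only [hnV, if_false]
        rw [MvPolynomial.vars_X]
        intro y hy
        rw [Finset.mem_singleton] at hy
        subst hy
        exact Finset.mem_sdiff.mpr ⟨hn, hnV⟩
    exact hvars hxvars
  have hMLP : MLp P := MLp_monomial (MLm_monoOf m) a
  have hPR' : P - R' ∈ idealOf 𝔽 S 𝔛 := by
    obtain ⟨q, hq⟩ := hPR
    set r : Clause σ → MvPolynomial σ 𝔽 := fun Cl =>
      if ρ (clausePoly 𝔽 Cl) = clausePoly 𝔽 Cl then ρ (q Cl) else 0 with hrdef
    refine ⟨r, ?_⟩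
    refine ml_ext (hMLP.sub hMLR') (MLp_mlin _) fun z hz => ?_
    set z' : σ → 𝔽 := fun x => if x ∈ V then b x else z x with hz'def
    have hz'01 : ∀ x, z' x = 0 ∨ z' x = 1 := fun x => by
      rw [hz'def]; dsimp only; split
      exacts [hb x, hz x]
    have h1 : MvPolynomial.eval z R' = MvPolynomial.eval z' R := by
      rw [hR'def, eval_mlin hz, hcomp]
    have h2 : MvPolynomial.eval z P = MvPolynomial.eval z' P := by
      rw [hPdef, MvPolynomial.eval_monomial, MvPolynomial.eval_monomial]
      congr 1
      unfold Finsupp.prod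
      refine Finset.prod_congr rfl fun x hx => ?_
      rw [monoOf_support] at hx
      have hxV : x ∉ V := hm x hx
      rw [hz'def]
      simp [hxV]
    have h3 : MvPolynomial.eval z (∑ Cl ∈ clausesOf S 𝔛, r Cl * clausePoly 𝔽 Cl)
        = MvPolynomial.eval z' (∑ Cl ∈ clausesOf S 𝔛, q Cl * clausePoly 𝔽 Cl) := by
      rw [map_sum, map_sum]
      refine Finset.sum_congr rfl fun Cl hCl => ?_
      rw [map_mul, map_mul]
      have hq' : ∀ p : MvPolynomial σ 𝔽,
          MvPolynomial.eval z' p = MvPolynomial.eval z (ρ p) := fun p => (hcomp z p).symm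
      rcases hclause Cl hCl with hfix | h0
      · rw [hrdef]
        dsimp only
        rw [if_pos hfix, hq' (q Cl), hq' (clausePoly 𝔽 Cl), hfix]
      · rw [hq' (q Cl), hq' (clausePoly 𝔽 Cl), h0, map_zero, mul_zero]
        by_cases hfix : ρ (clausePoly 𝔽 Cl) = clausePoly 𝔽 Cl
        · have hcl0 : clausePoly 𝔽 Cl = 0 := hfix.symm.trans h0
          rw [hcl0, map_zero, mul_zero]
        · rw [hrdef]
          dsimp only
          rw [if_neg hfix, map_zero, zero_mul]
    have h4 : MvPolynomial.eval z' (∑ Cl ∈ clausesOf S 𝔛, q Cl * clausePoly 𝔽 Cl)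
        = MvPolynomial.eval z' P - MvPolynomial.eval z' R := by
      have h5 := congrArg (MvPolynomial.eval z') hq
      rw [map_sub, eval_mlin hz'01] at h5
      exact h5.symm
    conv_rhs => rw [eval_mlin hz]
    rw [h3, h4, map_sub, h2, h1]
  have hD : R - R' ∈ idealOf 𝔽 S 𝔛 := by
    have h := idealOf_sub hPR' hPR
    have he : P - R' - (P - R) = R - R' := by ring
    rwa [he] at h
  have hD0 : R - R' = 0 := by
    by_contra hne
    have hMLD : MLp (R - R') := hMLR.sub hMLR'
    obtain ⟨m₀, hm₀, hmax⟩ := exists_lead ord _ (MvPolynomial.support_nonempty.mpr hne)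
      (fun e he => hMLD e he)
    have hm₀mem := MvPolynomial.support_sub σ R R' hm₀
    obtain ⟨e, he, hes⟩ : ∃ e ∈ R.support, m₀.support ⊆ e.support := by
      rcases Finset.mem_union.mp hm₀mem with hmem | hmem
      · exact ⟨m₀, hmem, Finset.Subset.refl _⟩
      · obtain ⟨e, he, hsube⟩ := hsupp' m₀ hmem
        exact ⟨e, he, hsube.trans Finset.sdiff_subset⟩
    exact hirr e he (lift_reducible ord S 𝔛 hD hm₀ hmax (hMLR e he) hes
      (MvPolynomial.mem_support_iff.mp he))
  have hReq : R = R' := sub_eq_zero.mp hD0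
  obtain ⟨x, hx⟩ := hVR
  rw [Finset.mem_inter] at hx
  obtain ⟨e', he', hxe'⟩ := (MvPolynomial.mem_vars x).mp hx.1
  rw [hReq] at he'
  obtain ⟨e, he, hsubV⟩ := hsupp' e' he'
  exact (Finset.mem_sdiff.mp (hsubV hxe')).2 hx.2
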